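/- Let Λ > 0 and μ > 0 be real numbers and x, u natural numbers with u ≤ x. Then Λ · ∫_0^∞ (x choose u) · exp(−μ t (x − u)) · (1 − exp(−μ t))^u · exp(−Λ t) dt = (Λ/μ) · (x choose u) · Γ(x − u + Λ/μ) · Γ(u + 1) / Γ(x + 1 + Λ/μ), where Γ is the real Gamma function. Equivalently, the inter-arrival departure probability p̂(u; x) equals (Λ/μ)·(x choose u)·B(x − u + Λ/μ, u + 1) with B the Beta function. -/

import Mathlib

open Real MeasureTheory Set Filter

lemma cont_aux (μ c : ℝ) (u : ℕ) :
    Continuous (fun t : ℝ => Real.exp (-c * t) * (1 - Real.exp (-μ * t)) ^ u) := by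
  continuity

lemma integ_aux (μ c : ℝ) (hμ : 0 < μ) (hc : 0 < c) (u : ℕ) :
    IntegrableOn (fun t : ℝ => Real.exp (-c * t) * (1 - Real.exp (-μ * t)) ^ u) (Set.Ioi 0) := by
  apply (exp_neg_integrableOn_Ioi 0 hc).mono'
  · exact (cont_aux μ c u).aestronglyMeasurable
  · filter_upwards [ae_restrict_mem measurableSet_Ioi] with t ht
    have ht0 : (0:ℝ) < t := ht
    have h1 : Real.exp (-μ * t) ≤ 1 := Real.exp_le_one_iff.mpr (by nlinarith)
    have h0 : 0 < Real.exp (-μ * t) := Real.exp_pos _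
    have hb : |1 - Real.exp (-μ * t)| ≤ 1 := by rw [abs_le]; constructor <;> nlinarith
    rw [norm_mul, norm_pow]
    calc ‖Real.exp (-c*t)‖ * ‖1 - Real.exp (-μ*t)‖ ^ u
        ≤ ‖Real.exp (-c*t)‖ * 1 ^ u := by gcongr; exact hb
      _ = Real.exp (-c*t) := by simp [abs_of_pos (Real.exp_pos _)]

lemma exp_tendsto (c : ℝ) (hc : 0 < c) :
    Tendsto (fun t : ℝ => Real.exp (-c * t)) atTop (nhds 0) := by
  have h1 : Tendsto (fun t : ℝ => c * t) atTop atTop :=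
    Tendsto.const_mul_atTop hc tendsto_id
  have := Real.tendsto_exp_neg_atTop_nhds_zero.comp h1
  simpa only [Function.comp_def, neg_mul] using this

lemma key (μ : ℝ) (hμ : 0 < μ) : ∀ (u : ℕ) (c : ℝ), 0 < c →
    ∫ t in Set.Ioi (0:ℝ), Real.exp (-c * t) * (1 - Real.exp (-μ * t)) ^ u
      = (u.factorial : ℝ) * μ ^ u / ∏ j ∈ Finset.range (u+1), (c + j * μ) := by
  intro u
  induction u with
  | zero =>
    intro c hc
    simp only [pow_zero, mul_one, Nat.factorial_zero, Nat.cast_one]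
    have hderiv : ∀ t ∈ Set.Ici (0:ℝ), HasDerivAt (fun t : ℝ => -Real.exp (-c*t) / c)
        (Real.exp (-c * t)) t := by
      intro t _
      have h2 := ((((hasDerivAt_id t).const_mul (-c)).exp).div_const c).neg
      refine (h2.congr_deriv ?_).congr_of_eventuallyEq ?_
      · simp only [id_eq, mul_one]
        field_simp
      · exact Filter.Eventually.of_forall fun s => by simp [neg_div]
    have hlim : Tendsto (fun t : ℝ => -Real.exp (-c*t) / c) atTop (nhds 0) := by
      have := ((exp_tendsto c hc).neg).div_const c
      simpa using this
    have := integral_Ioi_of_hasDerivAt_of_tendsto' hderiv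
      (by simpa using (exp_neg_integrableOn_Ioi 0 hc)) hlim
    rw [this]
    simp [neg_div]
  | succ u ih =>
    intro c hc
    -- G t = exp(-c t) * (1 - exp(-μ t))^(u+1)
    set G : ℝ → ℝ := fun t => Real.exp (-c*t) * (1 - Real.exp (-μ*t)) ^ (u+1) with hG
    have hderiv : ∀ t ∈ Set.Ici (0:ℝ), HasDerivAt G
        (-c * (Real.exp (-c*t) * (1 - Real.exp (-μ*t)) ^ (u+1))
          + ((u:ℝ)+1) * μ * (Real.exp (-(c+μ)*t) * (1 - Real.exp (-μ*t)) ^ u)) t := by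
      intro t _
      have e1 : HasDerivAt (fun t : ℝ => Real.exp (-c*t)) (-c * Real.exp (-c*t)) t := by
        simpa [mul_comm] using ((hasDerivAt_id t).const_mul (-c)).exp
      have e2 : HasDerivAt (fun t : ℝ => Real.exp (-μ*t)) (-μ * Real.exp (-μ*t)) t := by
        simpa [mul_comm] using ((hasDerivAt_id t).const_mul (-μ)).exp
      have e3 : HasDerivAt (fun t : ℝ => (1 - Real.exp (-μ*t)) ^ (u+1))
          (((u:ℝ)+1) * (1 - Real.exp (-μ*t)) ^ u * (μ * Real.exp (-μ*t))) t := by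
        have := (((hasDerivAt_const t (1:ℝ)).sub e2).pow (u+1))
        refine this.congr_deriv ?_
        push_cast [Pi.sub_apply]
        ring
      have := e1.mul e3
      refine this.congr_deriv ?_
      rw [show -(c+μ)*t = -c*t + -μ*t by ring, Real.exp_add]
      ring
    have hcμ : 0 < c + μ := by linarith
    have hint1 : IntegrableOn
        (fun t : ℝ => -c * (Real.exp (-c*t) * (1 - Real.exp (-μ*t)) ^ (u+1))) (Set.Ioi 0) :=
      (integ_aux μ c hμ hc (u+1)).const_mul _
    have hint2 : IntegrableOn
        (fun t : ℝ => ((u:ℝ)+1) * μ * (Real.exp (-(c+μ)*t) * (1 - Real.exp (-μ*t)) ^ u))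
        (Set.Ioi 0) :=
      (integ_aux μ (c+μ) hμ hcμ u).const_mul _
    have hintsum : IntegrableOn
        (fun t : ℝ => -c * (Real.exp (-c*t) * (1 - Real.exp (-μ*t)) ^ (u+1))
          + ((u:ℝ)+1) * μ * (Real.exp (-(c+μ)*t) * (1 - Real.exp (-μ*t)) ^ u)) (Set.Ioi 0) :=
      hint1.add hint2
    have hlim : Tendsto G atTop (nhds 0) := by
      apply squeeze_zero' (t₀ := atTop)
      · filter_upwards [Filter.eventually_ge_atTop (0:ℝ)] with t ht
        have h1 : Real.exp (-μ * t) ≤ 1 := Real.exp_le_one_iff.mpr (by nlinarith)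
        have h2 : (0:ℝ) ≤ 1 - Real.exp (-μ*t) := by linarith
        simp only [hG]
        positivity
      · filter_upwards [Filter.eventually_ge_atTop (0:ℝ)] with t ht
        have h1 : Real.exp (-μ * t) ≤ 1 := Real.exp_le_one_iff.mpr (by nlinarith)
        have h0 : 0 < Real.exp (-μ * t) := Real.exp_pos _
        calc G t ≤ Real.exp (-c*t) * 1 ^ (u+1) := by
              apply mul_le_mul_of_nonneg_left _ (Real.exp_pos _).le
              apply pow_le_pow_left₀ (by nlinarith) (by nlinarith)
          _ = Real.exp (-c*t) := by simp
      · exact exp_tendsto c hc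
    have hzero := integral_Ioi_of_hasDerivAt_of_tendsto' hderiv hintsum hlim
    have hG0 : G 0 = 0 := by simp [hG]
    rw [hG0, sub_zero, MeasureTheory.integral_add hint1 hint2,
      MeasureTheory.integral_const_mul, MeasureTheory.integral_const_mul, ih (c+μ) hcμ] at hzero
    -- hzero : -c * I + ((u+1)*μ) * (u! μ^u / P) = 0
    have hP : (0:ℝ) < ∏ j ∈ Finset.range (u+1), (c + μ + j * μ) := by
      apply Finset.prod_pos
      intro j _
      have : (0:ℝ) ≤ (j:ℝ) * μ := by positivity
      linarith
    have hprod : ∏ j ∈ Finset.range (u+2), (c + j * μ)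
        = (∏ j ∈ Finset.range (u+1), (c + μ + j * μ)) * c := by
      rw [Finset.prod_range_succ']
      congr 1
      · apply Finset.prod_congr rfl
        intro j _
        push_cast
        ring
      · simp
    have hI : ∫ t in Set.Ioi (0:ℝ), Real.exp (-c * t) * (1 - Real.exp (-μ * t)) ^ (u+1)
        = ((u:ℝ)+1) * μ * ((u.factorial : ℝ) * μ ^ u / ∏ j ∈ Finset.range (u+1), (c + μ + j * μ)) / c := by
      generalize (∫ t in Set.Ioi (0:ℝ), Real.exp (-c * t) * (1 - Real.exp (-μ * t)) ^ (u+1)) = J at hzero ⊢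
      field_simp at hzero ⊢
      linarith
    rw [hI, hprod]
    rw [Nat.factorial_succ]
    push_cast
    field_simp
    ring

lemma Gamma_add_nat (b : ℝ) (hb : 0 < b) (n : ℕ) :
    Real.Gamma (b + n) = (∏ j ∈ Finset.range n, (b + j)) * Real.Gamma b := by
  induction n with
  | zero => simp
  | succ n ih =>
    have hbn : (0:ℝ) < b + n := by positivity
    have : b + (n+1 : ℕ) = (b + n) + 1 := by push_cast; ring
    rw [this, Real.Gamma_add_one hbn.ne', ih, Finset.prod_range_succ]
    ring

/-- Closed form of the inter-arrival departure probability: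
`p̂(u;x) = (Λ/μ)·C(x,u)·Γ(x-u+Λ/μ)·Γ(u+1)/Γ(x+1+Λ/μ)`, i.e.
`(Λ/μ)·C(x,u)·B(x-u+Λ/μ, u+1)`. -/
theorem departure_probability_gamma_form
    (Λ μ : ℝ) (hΛ : 0 < Λ) (hμ : 0 < μ) (x u : ℕ) (hu : u ≤ x) :
    Λ * ∫ t in Set.Ioi (0 : ℝ),
        (x.choose u : ℝ) * Real.exp (-μ * t * ((x : ℝ) - u)) *
          (1 - Real.exp (-μ * t)) ^ u * Real.exp (-Λ * t)
      = (Λ / μ) * (x.choose u : ℝ) *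
          Real.Gamma ((x : ℝ) - u + Λ / μ) * Real.Gamma ((u : ℝ) + 1) /
          Real.Gamma ((x : ℝ) + 1 + Λ / μ) := by
  have hxu : (u:ℝ) ≤ (x:ℝ) := Nat.cast_le.mpr hu
  set c : ℝ := μ * ((x:ℝ) - u) + Λ with hc
  have hcpos : 0 < c := by
    have : (0:ℝ) ≤ μ * ((x:ℝ) - u) := by
      apply mul_nonneg hμ.le; linarith
    linarith
  set b : ℝ := (x:ℝ) - u + Λ / μ with hb
  have hbpos : 0 < b := by
    have : 0 < Λ / μ := div_pos hΛ hμ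
    rw [hb]; nlinarith
  have hfun : ∀ t : ℝ, (x.choose u : ℝ) * Real.exp (-μ * t * ((x : ℝ) - u)) *
          (1 - Real.exp (-μ * t)) ^ u * Real.exp (-Λ * t)
      = (x.choose u : ℝ) * (Real.exp (-c * t) * (1 - Real.exp (-μ * t)) ^ u) := by
    intro t
    rw [show -c * t = -μ * t * ((x:ℝ) - u) + -Λ * t by rw [hc]; ring, Real.exp_add]
    ring
  simp only [hfun]
  rw [MeasureTheory.integral_const_mul, key μ hμ u c hcpos]
  -- RHS Gamma rewriting
  have hx1 : (x:ℝ) + 1 + Λ / μ = b + (u+1 : ℕ) := by rw [hb]; push_cast; ring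
  rw [hx1, Gamma_add_nat b hbpos (u+1), Real.Gamma_nat_eq_factorial u]
  have hprodeq : ∏ j ∈ Finset.range (u+1), (c + j * μ)
      = μ ^ (u+1) * ∏ j ∈ Finset.range (u+1), (b + j) := by
    rw [show μ ^ (u+1) = μ ^ (Finset.range (u+1)).card by simp, Finset.pow_card_mul_prod]
    apply Finset.prod_congr rfl
    intro j _
    rw [hc, hb]
    field_simp
  rw [hprodeq]
  have hP : (0:ℝ) < ∏ j ∈ Finset.range (u+1), (b + j) := by
    apply Finset.prod_pos
    intro j _
    have : (0:ℝ) ≤ (j:ℝ) := by positivity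
    linarith
  have hΓ : 0 < Real.Gamma b := Real.Gamma_pos_of_pos hbpos
  field_simp
  ring
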